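/- Let f : A → B be an embedding of bounded distributive lattices that is separative, i.e., whenever b ⊓ c = ⊥ in B there exists a ∈ A with f(a) ≥ b and f(a) ⊓ c = ⊥. Then for every maximal proper filter M of B, the preimage f⁻¹[M] is a maximal proper filter of A. -/
import Mathlib


/-- `F` is a (lattice) filter: contains `⊤`, is upward closed, and closed under meets. -/
def IsLatticeFilter {A : Type*} [Lattice A] [BoundedOrder A] (F : Set A) : Prop :=
  ⊤ ∈ F ∧ (∀ a b : A, a ∈ F → a ≤ b → b ∈ F) ∧ (∀ a b : A, a ∈ F → b ∈ F → a ⊓ b ∈ F)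

/-- `F` is a maximal proper filter. -/
def IsMaximalFilter {A : Type*} [Lattice A] [BoundedOrder A] (F : Set A) : Prop :=
  IsLatticeFilter F ∧ (⊥ : A) ∉ F ∧
    ∀ G : Set A, IsLatticeFilter G → (⊥ : A) ∉ G → F ⊆ G → G = F

/-- If `f : A → B` is a separative embedding of bounded distributive lattices, then the
preimage of any maximal proper filter of `B` is a maximal proper filter of `A`. -/
theorem preimage_maxFilter_of_separative {A B : Type*}
    [DistribLattice A] [BoundedOrder A] [DistribLattice B] [BoundedOrder B]
    (f : A → B) (hinj : Function.Injective f)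
    (hbot : f ⊥ = ⊥) (htop : f ⊤ = ⊤)
    (hinf : ∀ a b : A, f (a ⊓ b) = f a ⊓ f b)
    (hsup : ∀ a b : A, f (a ⊔ b) = f a ⊔ f b)
    (hsep : ∀ b c : B, b ⊓ c = ⊥ → ∃ a : A, b ≤ f a ∧ f a ⊓ c = ⊥)
    (M : Set B) (hM : IsMaximalFilter M) :
    IsMaximalFilter (f ⁻¹' M) := by
  obtain ⟨⟨htopM, hupM, hmeetM⟩, hbotM, hmaxM⟩ := hM
  have hmono : ∀ a b : A, a ≤ b → f a ≤ f b := by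
    intro a b hab
    have : f (a ⊓ b) = f a := by rw [inf_eq_left.mpr hab]
    rw [hinf] at this
    exact inf_eq_left.mp this
  refine ⟨⟨by simpa [Set.mem_preimage, htop] using htopM, ?_, ?_⟩,
    by simpa [Set.mem_preimage, hbot] using hbotM, ?_⟩
  · intro a b ha hab
    exact hupM _ _ ha (hmono _ _ hab)
  · intro a b ha hb
    simpa [Set.mem_preimage, hinf] using hmeetM _ _ ha hb
  · intro G hG hGbot hsub
    refine Set.Subset.antisymm ?_ hsub
    intro a haG
    by_contra hfa
    -- consider filter generated by M and f a
    set N : Set B := {x : B | ∃ m ∈ M, m ⊓ f a ≤ x} with hN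
    have hNfilter : IsLatticeFilter N := by
      refine ⟨⟨⊤, htopM, le_top⟩, ?_, ?_⟩
      · rintro x y ⟨m, hm, hx⟩ hxy
        exact ⟨m, hm, hx.trans hxy⟩
      · rintro x y ⟨m, hm, hx⟩ ⟨m', hm', hy⟩
        refine ⟨m ⊓ m', hmeetM _ _ hm hm', le_inf ?_ ?_⟩
        · exact le_trans (inf_le_inf_right _ inf_le_left) hx
        · exact le_trans (inf_le_inf_right _ inf_le_right) hy
    have hMN : M ⊆ N := fun m hm => ⟨m, hm, inf_le_left⟩
    have hfaN : f a ∈ N := ⟨⊤, htopM, inf_le_right⟩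
    have hbotN : (⊥ : B) ∈ N := by
      by_contra hb
      have := hmaxM N hNfilter hb hMN
      rw [this] at hfaN
      exact hfa hfaN
    obtain ⟨m, hm, hmb⟩ := hbotN
    have hmb' : m ⊓ f a = ⊥ := le_bot_iff.mp hmb
    obtain ⟨a', ha'1, ha'2⟩ := hsep m (f a) hmb'
    have ha'M : a' ∈ f ⁻¹' M := hupM _ _ hm ha'1
    have ha'G : a' ∈ G := hsub ha'M
    have : a' ⊓ a ∈ G := hG.2.2 _ _ ha'G haG
    have hzero : a' ⊓ a = ⊥ := hinj (by rw [hinf, ha'2, hbot])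
    rw [hzero] at this
    exact hGbot this
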